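/- For a single split A|B of [n] with both parts contiguous in a circular order c, the split pseudometric δ(i,j) = 1 if the split separates i and j, 0 otherwise, satisfies the Kalmanson condition with respect to c: for every quadruple (i,j,k,l) in circular position in c, max{δ(i,j)+δ(k,l), δ(j,k)+δ(i,l)} ≤ δ(i,k)+δ(j,l). -/

import Mathlib

open Fin.NatCast in
/-- A subset of Fin n is contiguous (an arc) with respect to the circular order
given by a permutation σ, read cyclically. -/
def IsContiguous (n : ℕ) [NeZero n] (σ : Equiv.Perm (Fin n))
    (A : Finset (Fin n)) : Prop :=
  ∃ (a : Fin n) (m : ℕ),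
    A = (Finset.range m).image (fun t : ℕ => σ (a + (t : Fin n)))

private lemma key_bool (a b c d : Prop) [Decidable a] [Decidable b] [Decidable c] [Decidable d]
    (h1 : ¬(a ∧ ¬b ∧ c ∧ ¬d)) (h2 : ¬(¬a ∧ b ∧ ¬c ∧ d)) :
    max ((if a ↔ b then (0:ℝ) else 1) + (if c ↔ d then (0:ℝ) else 1))
        ((if b ↔ c then (0:ℝ) else 1) + (if a ↔ d then (0:ℝ) else 1)) ≤
      (if a ↔ c then (0:ℝ) else 1) + (if b ↔ d then (0:ℝ) else 1) := by
  by_cases ha : a <;> by_cases hb : b <;> by_cases hc : c <;> by_cases hd : d <;>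
    simp_all <;> norm_num

private lemma mod_two_n (v n : ℕ) (h : v < 2 * n) :
    v % n = if v < n then v else v - n := by
  split_ifs with hv
  · exact Nat.mod_eq_of_lt hv
  · rw [Nat.mod_eq_sub_mod (le_of_not_gt hv), Nat.mod_eq_of_lt (by omega)]

private lemma no_alt (n : ℕ) [NeZero n] (c m : ℕ) (hcn : c ≤ n)
    (p q r s : Fin n) (h1 : p < q) (h2 : q < r) (h3 : r < s) :
    (¬((p.val + c) % n < m ∧ ¬(q.val + c) % n < m ∧ (r.val + c) % n < m
        ∧ ¬(s.val + c) % n < m)) ∧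
    (¬(¬(p.val + c) % n < m ∧ (q.val + c) % n < m ∧ ¬(r.val + c) % n < m
        ∧ (s.val + c) % n < m)) := by
  have hp := p.isLt; have hq := q.isLt; have hr := r.isLt; have hs := s.isLt
  rw [Fin.lt_def] at h1 h2 h3
  rw [mod_two_n _ n (by omega), mod_two_n _ n (by omega), mod_two_n _ n (by omega),
    mod_two_n _ n (by omega)]
  split_ifs <;> omega

/-- For a single split A|Aᶜ of Fin n with both parts nonempty and contiguous in the
circular order σ, the split pseudometric δ(i,j) = 1 if the split separates i and j,
0 otherwise, satisfies the Kalmanson condition with respect to σ. -/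
theorem stmt_12 (n : ℕ) [NeZero n] (σ : Equiv.Perm (Fin n))
    (A : Finset (Fin n)) (hA : A.Nonempty) (hA' : Aᶜ.Nonempty)
    (hc : IsContiguous n σ A) (hc' : IsContiguous n σ Aᶜ)
    (δ : Fin n → Fin n → ℝ)
    (hδ : ∀ i j, δ i j = if ((i ∈ A) ↔ (j ∈ A)) then 0 else 1) :
    ∀ p q r s : Fin n, p < q → q < r → r < s →
      max (δ (σ p) (σ q) + δ (σ r) (σ s)) (δ (σ q) (σ r) + δ (σ p) (σ s)) ≤
        δ (σ p) (σ r) + δ (σ q) (σ s) := by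
  obtain ⟨a, m, hAeq⟩ := hc
  have npos : 0 < n := Nat.pos_of_ne_zero (NeZero.ne n)
  -- m ≤ n, else A = univ contradicting hA'
  have hmn : m ≤ n := by
    by_contra hmn
    push_neg at hmn
    have hAu : A = Finset.univ := by
      apply Finset.eq_univ_of_forall
      intro y
      rw [hAeq, Finset.mem_image]
      refine ⟨(σ.symm y - a).val, Finset.mem_range.2 (lt_of_lt_of_le (σ.symm y - a).isLt
        hmn.le), ?_⟩
      rw [Fin.cast_val_eq_self]
      have : a + (σ.symm y - a) = σ.symm y := by abel
      rw [this, Equiv.apply_symm_apply]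
    obtain ⟨z, hz⟩ := hA'
    rw [Finset.mem_compl, hAu] at hz
    exact hz (Finset.mem_univ z)
  -- membership characterization
  open Fin.NatCast in
  have hmem : ∀ x : Fin n, σ x ∈ A ↔ (x - a).val < m := by
    intro x
    rw [hAeq, Finset.mem_image]
    constructor
    · rintro ⟨t, ht, heq⟩
      rw [Finset.mem_range] at ht
      have hax : a + (t : Fin n) = x := σ.injective heq
      rw [← hax]
      have : a + (t : Fin n) - a = (t : Fin n) := by abel
      rw [this, Fin.val_cast_of_lt (by omega)]
      exact ht
    · intro h
      refine ⟨(x - a).val, Finset.mem_range.2 h, ?_⟩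
      rw [Fin.cast_val_eq_self]
      congr 1
      abel
  -- value of (x - a).val
  have hsub : ∀ x : Fin n, (x - a).val = (x.val + (n - a.val)) % n := by
    intro x
    simp [Fin.sub_def]
    ring_nf
  intro p q r s h1 h2 h3
  have halt := no_alt n (n - a.val) m (by omega) p q r s h1 h2 h3
  rw [← hsub p, ← hsub q, ← hsub r, ← hsub s] at halt
  rw [← hmem p, ← hmem q, ← hmem r, ← hmem s] at halt
  rw [hδ, hδ, hδ, hδ, hδ, hδ]
  exact key_bool _ _ _ _ halt.1 halt.2
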